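/- Let δ ∈ ℝ, let (λ_k)_{k≥0} be a strictly increasing sequence of positive real numbers, let λ_# ∈ (0, λ₀], and let f ∈ 𝒟(δ, λ, λ_#) with associated Dirichlet series L_n(s) = Σ_{k≥0} a^n_k λ_k^{−s}. Assume a⁰₀ ≠ 0. Then there exists δ' > δ such that for every constant C > 0, the set of zeroes of f in Ω_{δ',C} = {s ∈ ℂ : Re s > δ' and Re s ≤ C·log|Im s|} is finite. -/

import Mathlib

/-- Membership in the class `𝒟(δ, λ)`: the Dirichlet series with coefficients `a`
and frequencies `λ` converges absolutely at every real `σ > δ`. -/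
def DirichletClass (δ : ℝ) (lam : ℕ → ℝ) (a : ℕ → ℂ) : Prop :=
  ∀ σ : ℝ, δ < σ → Summable fun k => ‖a k‖ * lam k ^ (-σ)

/-- The Dirichlet series `L(s) = Σ_k a_k λ_k^{-s}`. -/
noncomputable def DirichletSeries (lam : ℕ → ℝ) (a : ℕ → ℂ) (s : ℂ) : ℂ :=
  ∑' k, a k * (lam k : ℂ) ^ (-s)

set_option maxHeartbeats 2000000

lemma norm_cpow_nat (x : ℝ) (hx : 0 < x) (s : ℂ) :
    ‖(x : ℂ) ^ (-s)‖ = x ^ (-s.re) := by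
  rw [Complex.norm_cpow_eq_rpow_re_of_pos hx, Complex.neg_re]

lemma term_norm (lam : ℕ → ℝ) (hpos : ∀ k, 0 < lam k) (b : ℕ → ℂ) (s : ℂ) (k : ℕ) :
    ‖b k * (lam k : ℂ) ^ (-s)‖ = ‖b k‖ * lam k ^ (-s.re) := by
  rw [norm_mul, norm_cpow_nat _ (hpos k)]

lemma term_le (lam : ℕ → ℝ) (hpos : ∀ k, 0 < lam k) (hmono : Monotone lam)
    (b : ℕ → ℂ) (σ₁ σ : ℝ) (hs : σ₁ ≤ σ) (j k : ℕ) (hjk : j ≤ k) :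
    ‖b k‖ * lam k ^ (-σ) ≤ ‖b k‖ * lam k ^ (-σ₁) * lam j ^ (σ₁ - σ) := by
  have h1 : lam k ^ (-σ) = lam k ^ (-σ₁) * lam k ^ (σ₁ - σ) := by
    rw [← Real.rpow_add (hpos k)]; ring_nf
  rw [h1, mul_assoc]
  have h2 : lam k ^ (σ₁ - σ) ≤ lam j ^ (σ₁ - σ) :=
    Real.rpow_le_rpow_of_nonpos (hpos j) (hmono hjk) (by linarith)
  exact mul_le_mul_of_nonneg_left
    (mul_le_mul_of_nonneg_left h2 (Real.rpow_nonneg (hpos k).le _)) (norm_nonneg _)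

lemma dirichlet_norm_le (lam : ℕ → ℝ) (hpos : ∀ k, 0 < lam k) (hmono : Monotone lam)
    (b : ℕ → ℂ) (σ₁ : ℝ) (hb : Summable fun k => ‖b k‖ * lam k ^ (-σ₁))
    (s : ℂ) (hs : σ₁ ≤ s.re) (hb' : Summable fun k => ‖b k‖ * lam k ^ (-s.re)) :
    ‖DirichletSeries lam b s‖ ≤ (∑' k, ‖b k‖ * lam k ^ (-σ₁)) * lam 0 ^ (σ₁ - s.re) := by
  have h1 : ‖DirichletSeries lam b s‖ ≤ ∑' k, ‖b k‖ * lam k ^ (-s.re) := by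
    rw [DirichletSeries]
    have := norm_tsum_le_tsum_norm (f := fun k => b k * (lam k : ℂ) ^ (-s)) ?_
    · simpa only [term_norm lam hpos] using this
    · simpa only [term_norm lam hpos] using hb'
  refine h1.trans ?_
  calc ∑' k, ‖b k‖ * lam k ^ (-s.re)
      ≤ ∑' k, ‖b k‖ * lam k ^ (-σ₁) * lam 0 ^ (σ₁ - s.re) :=
        Summable.tsum_le_tsum (fun k => term_le lam hpos hmono b σ₁ s.re hs 0 k (Nat.zero_le k))
          hb' (hb.mul_right _)
    _ = (∑' k, ‖b k‖ * lam k ^ (-σ₁)) * lam 0 ^ (σ₁ - s.re) := tsum_mul_right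

/-- If `f ∈ 𝒟(δ, λ, λ_#)` and the leading coefficient `a⁰₀` of `L₀`
is nonzero, then there is `δ' > δ` such that for every `C > 0`, `f` has only finitely
many zeroes in `Ω_{δ',C} = {s : Re s > δ', Re s ≤ C log |Im s|}`. -/
theorem stmt0 (δ : ℝ) (lam : ℕ → ℝ) (hmono : StrictMono lam) (hpos : ∀ k, 0 < lam k)
    (lamSharp : ℝ) (hSharp₀ : 0 < lamSharp) (hSharp₁ : lamSharp ≤ lam 0)
    (a : ℕ → ℕ → ℂ) (hD : ∀ n, DirichletClass δ lam (a n))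
    (f : ℂ → ℂ) (hf : DifferentiableOn ℂ f {s : ℂ | δ < s.re})
    (hrem : ∀ N : ℕ, ∃ C : ℝ, 0 < C ∧ ∀ s : ℂ, δ < s.re →
      ‖f s - ∑ n ∈ Finset.range (N + 1), s ^ (-(n : ℤ)) * DirichletSeries lam (a n) s‖
        ≤ C * ‖s‖ ^ (-(N + 1 : ℤ)) * lamSharp ^ (-s.re))
    (ha : a 0 0 ≠ 0) :
    ∃ δ' : ℝ, δ < δ' ∧ ∀ C : ℝ, 0 < C →
      {s : ℂ | δ' < s.re ∧ s.re ≤ C * Real.log |s.im| ∧ f s = 0}.Finite := by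
  classical
  set σ₁ := δ + 1 with hσ₁def
  have hσ₁δ : δ < σ₁ := by simp [hσ₁def]
  have hl0 : 0 < lam 0 := hpos 0
  have hl1 : 0 < lam 1 := hpos 1
  have hl01 : lam 0 < lam 1 := hmono Nat.zero_lt_one
  set A := ‖a 0 0‖ with hAdef
  have hA : 0 < A := norm_pos_iff.mpr ha
  have hS0 : Summable fun k => ‖a 0 (k+1)‖ * lam (k+1) ^ (-σ₁) :=
    (summable_nat_add_iff (f := fun k => ‖a 0 k‖ * lam k ^ (-σ₁)) 1).2 (hD 0 σ₁ hσ₁δ)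
  set S' := ∑' k, ‖a 0 (k+1)‖ * lam (k+1) ^ (-σ₁) with hS'def
  have hg : Filter.Tendsto (fun σ : ℝ => (S' * lam 1 ^ σ₁) * (lam 0 / lam 1) ^ σ)
      Filter.atTop (nhds 0) := by
    have h0 := tendsto_rpow_atTop_of_base_lt_one (lam 0 / lam 1)
      (by nlinarith [div_pos hl0 hl1] : (-1:ℝ) < lam 0 / lam 1)
      ((div_lt_one hl1).mpr hl01)
    simpa using h0.const_mul (S' * lam 1 ^ σ₁)
  obtain ⟨x₀, hx₀⟩ := Filter.eventually_atTop.1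
    (hg.eventually (gt_mem_nhds (by positivity : (0:ℝ) < A/4)))
  set δ' := max (max 0 σ₁) x₀ with hδ'def
  have hδ'σ₁ : σ₁ ≤ δ' := le_max_of_le_left (le_max_right _ _)
  have hδ'0 : (0:ℝ) ≤ δ' := le_max_of_le_left (le_max_left _ _)
  have hδ'x₀ : x₀ ≤ δ' := le_max_right _ _
  have hδδ' : δ < δ' := lt_of_lt_of_le hσ₁δ hδ'σ₁
  -- tail bound for L₀
  have htail : ∀ s : ℂ, δ' < s.re →
      ‖DirichletSeries lam (a 0) s - a 0 0 * ((lam 0 : ℝ) : ℂ) ^ (-s)‖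
        ≤ A/4 * lam 0 ^ (-s.re) := by
    intro s hs
    have hδs : δ < s.re := lt_trans hδδ' hs
    have hσ₁s : σ₁ ≤ s.re := le_trans hδ'σ₁ hs.le
    have hsum : Summable fun k => a 0 k * (lam k : ℂ) ^ (-s) := by
      apply Summable.of_norm
      simpa only [term_norm lam hpos] using hD 0 s.re hδs
    have hL0 : DirichletSeries lam (a 0) s
        = a 0 0 * ((lam 0 : ℝ) : ℂ) ^ (-s) + ∑' k, a 0 (k+1) * ((lam (k+1) : ℝ) : ℂ) ^ (-s) := by
      rw [DirichletSeries]; exact hsum.tsum_eq_zero_add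
    rw [hL0, add_sub_cancel_left]
    have hnsum : Summable fun k => ‖a 0 (k+1)‖ * lam (k+1) ^ (-s.re) :=
      (summable_nat_add_iff (f := fun k => ‖a 0 k‖ * lam k ^ (-s.re)) 1).2 (hD 0 s.re hδs)
    have hterm : ∀ k : ℕ, ‖a 0 (k+1) * ((lam (k+1) : ℝ) : ℂ) ^ (-s)‖
        = ‖a 0 (k+1)‖ * lam (k+1) ^ (-s.re) := fun k => term_norm lam hpos (a 0) s (k+1)
    have h1 : ‖∑' k, a 0 (k+1) * ((lam (k+1) : ℝ) : ℂ) ^ (-s)‖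
        ≤ ∑' k, ‖a 0 (k+1)‖ * lam (k+1) ^ (-s.re) := by
      have := norm_tsum_le_tsum_norm
        (f := fun k => a 0 (k+1) * ((lam (k+1) : ℝ) : ℂ) ^ (-s)) (by simpa only [hterm] using hnsum)
      simpa only [hterm] using this
    refine h1.trans ?_
    have h2 : ∑' k, ‖a 0 (k+1)‖ * lam (k+1) ^ (-s.re) ≤ S' * lam 1 ^ (σ₁ - s.re) := by
      calc ∑' k, ‖a 0 (k+1)‖ * lam (k+1) ^ (-s.re)
          ≤ ∑' k, ‖a 0 (k+1)‖ * lam (k+1) ^ (-σ₁) * lam 1 ^ (σ₁ - s.re) :=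
            Summable.tsum_le_tsum (fun k => term_le lam hpos hmono.monotone (a 0) σ₁ s.re hσ₁s 1 (k+1)
              (Nat.succ_le_succ (Nat.zero_le k))) hnsum (hS0.mul_right _)
        _ = S' * lam 1 ^ (σ₁ - s.re) := tsum_mul_right
    refine h2.trans ?_
    have hx := hx₀ s.re (le_trans hδ'x₀ hs.le)
    have key : S' * lam 1 ^ (σ₁ - s.re)
        = (S' * lam 1 ^ σ₁ * (lam 0 / lam 1) ^ s.re) * lam 0 ^ (-s.re) := by
      rw [Real.rpow_sub hl1, Real.div_rpow hl0.le hl1.le, Real.rpow_neg hl0.le]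
      have h01 : lam 0 ^ s.re ≠ 0 := ne_of_gt (Real.rpow_pos_of_pos hl0 _)
      have h11 : lam 1 ^ s.re ≠ 0 := ne_of_gt (Real.rpow_pos_of_pos hl1 _)
      field_simp
    rw [key]
    exact mul_le_mul_of_nonneg_right hx.le (Real.rpow_nonneg hl0.le _)
  refine ⟨δ', hδδ', ?_⟩
  intro C hC
  set β := max 0 (Real.log (lam 0 / lamSharp)) with hβdef
  have hβ0 : 0 ≤ β := le_max_left _ _
  obtain ⟨N, hN⟩ := exists_nat_ge (C * β)
  obtain ⟨CN, hCN0, hCN⟩ := hrem N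
  set Msum := ∑ n ∈ Finset.range N, (∑' k, ‖a (n+1) k‖ * lam k ^ (-σ₁)) with hMdef
  have hMsum0 : 0 ≤ Msum :=
    Finset.sum_nonneg fun n _ => tsum_nonneg fun k => mul_nonneg (norm_nonneg _) (Real.rpow_nonneg (hpos k).le _)
  set R : ℝ := 1 + 4 * (lam 0 ^ σ₁ * Msum) / A + 4 * CN / A with hRdef
  have hX1 : 0 ≤ 4 * (lam 0 ^ σ₁ * Msum) / A :=
    div_nonneg (mul_nonneg (by norm_num) (mul_nonneg (Real.rpow_nonneg hl0.le _) hMsum0)) hA.le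
  have hX2 : 0 ≤ 4 * CN / A := div_nonneg (mul_nonneg (by norm_num) hCN0.le) hA.le
  have hR1 : 1 ≤ R := by rw [hRdef]; linarith
  -- key nonvanishing claim
  have key : ∀ s : ℂ, δ' < s.re → s.re ≤ C * Real.log |s.im| → R ≤ ‖s‖ → f s ≠ 0 := by
    intro s hs1 hs2 hsR hfs
    have hδs : δ < s.re := lt_trans hδδ' hs1
    have hσ₁s : σ₁ ≤ s.re := le_trans hδ'σ₁ hs1.le
    have hσ0 : 0 < s.re := lt_of_le_of_lt hδ'0 hs1
    have hs1' : 1 ≤ ‖s‖ := le_trans hR1 hsR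
    have hspos : 0 < ‖s‖ := by linarith
    have him : 1 < |s.im| := by
      by_contra h
      push_neg at h
      have := Real.log_nonpos (abs_nonneg _) h
      nlinarith
    have himle : |s.im| ≤ ‖s‖ := by
      exact Complex.abs_im_le_norm s
    have hlogim : Real.log |s.im| ≤ Real.log ‖s‖ :=
      Real.log_le_log (by linarith) himle
    have hlogs0 : 0 ≤ Real.log ‖s‖ := Real.log_nonneg hs1'
    have hsC : s.re ≤ C * Real.log ‖s‖ :=
      hs2.trans (mul_le_mul_of_nonneg_left hlogim hC.le)
    -- remainder estimate
    have hnn : 0 ≤ lam 0 ^ (-s.re) := Real.rpow_nonneg hl0.le _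
    have hrem_le : CN * ‖s‖ ^ (-(N + 1 : ℤ)) * lamSharp ^ (-s.re)
        ≤ A/4 * lam 0 ^ (-s.re) := by
      have e1 : ‖s‖ ^ (-(N + 1 : ℤ)) = ‖s‖ ^ (-(N + 1 : ℝ)) := by
        rw [← Real.rpow_intCast ‖s‖ (-(N + 1 : ℤ))]
        norm_num
      have e2 : lamSharp ^ (-s.re) = (lam 0 / lamSharp) ^ s.re * lam 0 ^ (-s.re) := by
        rw [Real.div_rpow hl0.le hSharp₀.le, Real.rpow_neg hSharp₀.le, Real.rpow_neg hl0.le]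
        have h1 : lam 0 ^ s.re ≠ 0 := ne_of_gt (Real.rpow_pos_of_pos hl0 _)
        field_simp
      have e3 : (lam 0 / lamSharp) ^ s.re ≤ ‖s‖ ^ (C * β) := by
        rw [Real.rpow_def_of_pos (div_pos hl0 hSharp₀), Real.rpow_def_of_pos hspos]
        apply Real.exp_le_exp.mpr
        calc Real.log (lam 0 / lamSharp) * s.re ≤ β * s.re :=
              mul_le_mul_of_nonneg_right (le_max_right _ _) hσ0.le
          _ ≤ β * (C * Real.log ‖s‖) := mul_le_mul_of_nonneg_left hsC hβ0
          _ = Real.log ‖s‖ * (C * β) := by ring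
      have e5 : ‖s‖ ^ (-(N+1:ℝ)) * ‖s‖ ^ (C*β) ≤ ‖s‖ ^ (-1:ℝ) := by
        rw [← Real.rpow_add hspos]
        apply Real.rpow_le_rpow_of_exponent_le hs1'
        linarith
      have e6 : CN * ‖s‖ ^ (-1:ℝ) ≤ A/4 := by
        rw [Real.rpow_neg_one, mul_inv_le_iff₀ hspos]
        have hRs : 4 * CN / A ≤ ‖s‖ := le_trans (by rw [hRdef]; linarith) hsR
        rw [div_le_iff₀ hA] at hRs
        nlinarith
      calc CN * ‖s‖ ^ (-(N + 1 : ℤ)) * lamSharp ^ (-s.re)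
          = CN * (‖s‖ ^ (-(N+1:ℝ)) * ((lam 0 / lamSharp) ^ s.re * lam 0 ^ (-s.re))) := by
            rw [e1, e2]; ring
        _ ≤ CN * (‖s‖ ^ (-(N+1:ℝ)) * (‖s‖ ^ (C*β) * lam 0 ^ (-s.re))) := by
            refine mul_le_mul_of_nonneg_left ?_ hCN0.le
            refine mul_le_mul_of_nonneg_left ?_ (Real.rpow_nonneg hspos.le _)
            exact mul_le_mul_of_nonneg_right e3 hnn
        _ = CN * (‖s‖ ^ (-(N+1:ℝ)) * ‖s‖ ^ (C*β)) * lam 0 ^ (-s.re) := by ring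
        _ ≤ CN * ‖s‖ ^ (-1:ℝ) * lam 0 ^ (-s.re) := by
            exact mul_le_mul_of_nonneg_right (mul_le_mul_of_nonneg_left e5 hCN0.le) hnn
        _ ≤ A/4 * lam 0 ^ (-s.re) := mul_le_mul_of_nonneg_right e6 hnn
    -- middle terms
    have hmid : ∀ n ∈ Finset.range N,
        ‖s ^ (-((n+1:ℕ) : ℤ)) * DirichletSeries lam (a (n+1)) s‖
          ≤ ‖s‖⁻¹ * ((∑' k, ‖a (n+1) k‖ * lam k ^ (-σ₁)) * lam 0 ^ (σ₁ - s.re)) := by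
      intro n _
      rw [norm_mul, norm_zpow]
      have hb1 : ‖s‖ ^ (-((n+1:ℕ):ℤ)) ≤ ‖s‖⁻¹ := by
        rw [zpow_neg, zpow_natCast]
        exact inv_anti₀ hspos (le_self_pow₀ hs1' (Nat.succ_ne_zero n))
      have hb2 := dirichlet_norm_le lam hpos hmono.monotone (a (n+1)) σ₁
        (hD (n+1) σ₁ hσ₁δ) s hσ₁s (hD (n+1) s.re hδs)
      exact mul_le_mul hb1 hb2 (norm_nonneg _) (inv_nonneg.mpr hspos.le)
    have hmidsum : ‖∑ n ∈ Finset.range N, s ^ (-((n+1:ℕ):ℤ)) * DirichletSeries lam (a (n+1)) s‖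
        ≤ A/4 * lam 0 ^ (-s.re) := by
      have e7 : lam 0 ^ (σ₁ - s.re) = lam 0 ^ σ₁ * lam 0 ^ (-s.re) := by
        rw [← Real.rpow_add hl0]; ring_nf
      have e8 : ‖s‖⁻¹ * (lam 0 ^ σ₁ * Msum) ≤ A/4 := by
        rw [inv_mul_le_iff₀ hspos]
        have hRs : 4 * (lam 0 ^ σ₁ * Msum) / A ≤ ‖s‖ := le_trans (by rw [hRdef]; linarith) hsR
        rw [div_le_iff₀ hA] at hRs
        nlinarith
      calc ‖∑ n ∈ Finset.range N, s ^ (-((n+1:ℕ):ℤ)) * DirichletSeries lam (a (n+1)) s‖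
          ≤ ∑ n ∈ Finset.range N, ‖s ^ (-((n+1:ℕ):ℤ)) * DirichletSeries lam (a (n+1)) s‖ :=
            norm_sum_le _ _
        _ ≤ ∑ n ∈ Finset.range N,
              ‖s‖⁻¹ * ((∑' k, ‖a (n+1) k‖ * lam k ^ (-σ₁)) * lam 0 ^ (σ₁ - s.re)) :=
            Finset.sum_le_sum hmid
        _ = ‖s‖⁻¹ * (Msum * lam 0 ^ (σ₁ - s.re)) := by
            rw [← Finset.mul_sum, ← Finset.sum_mul]
        _ = (‖s‖⁻¹ * (lam 0 ^ σ₁ * Msum)) * lam 0 ^ (-s.re) := by rw [e7]; ring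
        _ ≤ A/4 * lam 0 ^ (-s.re) := mul_le_mul_of_nonneg_right e8 hnn
    -- combine
    have hsplit : ∑ n ∈ Finset.range (N+1), s ^ (-(n:ℤ)) * DirichletSeries lam (a n) s
        = DirichletSeries lam (a 0) s
          + ∑ n ∈ Finset.range N, s ^ (-((n+1:ℕ):ℤ)) * DirichletSeries lam (a (n+1)) s := by
      rw [Finset.sum_range_succ' (fun n => s ^ (-(n:ℤ)) * DirichletSeries lam (a n) s) N]
      simp [add_comm]
    have hid : a 0 0 * ((lam 0:ℝ):ℂ) ^ (-s)
        = f s - (f s - ∑ n ∈ Finset.range (N+1), s ^ (-(n:ℤ)) * DirichletSeries lam (a n) s)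
          - (DirichletSeries lam (a 0) s - a 0 0 * ((lam 0:ℝ):ℂ) ^ (-s))
          - ∑ n ∈ Finset.range N, s ^ (-((n+1:ℕ):ℤ)) * DirichletSeries lam (a (n+1)) s := by
      rw [hsplit]; ring
    have hX := (hCN s hδs).trans hrem_le
    have hY := htail s hs1
    have h0 : ‖a 0 0 * ((lam 0:ℝ):ℂ) ^ (-s)‖ = A * lam 0 ^ (-s.re) := term_norm lam hpos (a 0) s 0
    have hnorms := congrArg (fun z : ℂ => ‖z‖) hid
    rw [h0] at hnorms
    have hb : A * lam 0 ^ (-s.re)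
        ≤ ‖f s‖
          + ‖f s - ∑ n ∈ Finset.range (N+1), s ^ (-(n:ℤ)) * DirichletSeries lam (a n) s‖
          + ‖DirichletSeries lam (a 0) s - a 0 0 * ((lam 0:ℝ):ℂ) ^ (-s)‖
          + ‖∑ n ∈ Finset.range N, s ^ (-((n+1:ℕ):ℤ)) * DirichletSeries lam (a (n+1)) s‖ := by
      rw [hnorms]
      refine le_trans (norm_sub_le _ _) ?_
      refine add_le_add ?_ le_rfl
      refine le_trans (norm_sub_le _ _) ?_
      exact add_le_add (norm_sub_le _ _) le_rfl
    have hlpos : 0 < lam 0 ^ (-s.re) := Real.rpow_pos_of_pos hl0 _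
    have hfinal : A * lam 0 ^ (-s.re) ≤ ‖f s‖ + 3 * (A/4 * lam 0 ^ (-s.re)) := by
      linarith [hX, hY, hmidsum, hb]
    rw [hfs, norm_zero] at hfinal
    linarith [mul_pos hA hlpos]
  -- finiteness via compactness and isolated zeros
  by_contra hinf
  have hZinf : Set.Infinite {s : ℂ | δ' < s.re ∧ s.re ≤ C * Real.log |s.im| ∧ f s = 0} := hinf
  have hZK : {s : ℂ | δ' < s.re ∧ s.re ≤ C * Real.log |s.im| ∧ f s = 0}
      ⊆ Metric.closedBall 0 R ∩ {s : ℂ | δ' ≤ s.re} := by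
    intro s hs
    obtain ⟨h1, h2, h3⟩ := hs
    refine ⟨?_, h1.le⟩
    rw [Metric.mem_closedBall, dist_zero_right]
    by_contra hRs
    push_neg at hRs
    exact key s h1 h2 hRs.le h3
  have hK : IsCompact (Metric.closedBall (0:ℂ) R ∩ {s : ℂ | δ' ≤ s.re}) :=
    (isCompact_closedBall 0 R).inter_right (isClosed_le continuous_const Complex.continuous_re)
  obtain ⟨z₀, hz₀K, hz₀⟩ := hZinf.exists_accPt_of_subset_isCompact hK hZK
  have hfreq : ∃ᶠ z in nhdsWithin z₀ {z₀}ᶜ, f z = 0 := by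
    rw [frequently_nhdsWithin_iff]
    exact (accPt_iff_frequently.mp hz₀).mono fun z hz =>
      ⟨hz.2.2.2, Set.mem_compl_singleton_iff.mpr hz.1⟩
  have hUopen : IsOpen {s : ℂ | δ < s.re} := isOpen_lt continuous_const Complex.continuous_re
  have hUpre : IsPreconnected {s : ℂ | δ < s.re} := (convex_halfSpace_re_gt δ).isPreconnected
  have hz₀U : z₀ ∈ {s : ℂ | δ < s.re} := lt_of_lt_of_le hδδ' hz₀K.2
  have hzero := (hf.analyticOnNhd hUopen).eqOn_zero_of_preconnected_of_frequently_eq_zero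
    hUpre hz₀U hfreq
  -- nonvanishing point
  set t₁ := max R (Real.exp ((δ' + 1) / C)) with ht₁def
  have ht₁pos : 0 < t₁ := lt_of_lt_of_le (Real.exp_pos _) (le_max_right _ _)
  set s₁ : ℂ := ⟨δ' + 1, t₁⟩ with hs₁def
  have hs₁re : s₁.re = δ' + 1 := rfl
  have hs₁im : s₁.im = t₁ := rfl
  have h1 : δ' < s₁.re := by rw [hs₁re]; linarith
  have h2 : s₁.re ≤ C * Real.log |s₁.im| := by
    rw [hs₁re, hs₁im, abs_of_pos ht₁pos]
    have hlog : (δ' + 1) / C ≤ Real.log t₁ :=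
      (Real.le_log_iff_exp_le ht₁pos).mpr (le_max_right _ _)
    calc δ' + 1 = C * ((δ' + 1) / C) := by field_simp
      _ ≤ C * Real.log t₁ := mul_le_mul_of_nonneg_left hlog hC.le
  have h3 : R ≤ ‖s₁‖ := by
    have h4 : t₁ ≤ |s₁.im| := by rw [hs₁im, abs_of_pos ht₁pos]
    have h5 : |s₁.im| ≤ ‖s₁‖ := by exact Complex.abs_im_le_norm s₁
    have h6 : R ≤ t₁ := le_max_left _ _
    linarith
  exact key s₁ h1 h2 h3 (hzero (lt_trans hδδ' h1))
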